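/- Let B be a self-adjoint operator with spectral measure E on a Hilbert space H, and x ∈ H. If E_r(x,B) = O(r^{-α}) as r → ∞ for some α > 0, then for every positive integer k < α, ω_k(t, x, B) = O(t^k) as t → 0⁺. -/

import Mathlib

open MeasureTheory Complex Set Real
open scoped ENNReal NNReal

lemma norm_exp_I_mul_sub_one_le (θ : ℝ) : ‖Complex.exp (Complex.I * θ) - 1‖ ≤ |θ| := by
  have h1 : Complex.exp (Complex.I * θ) - 1
      = ((Real.cos θ - 1 : ℝ) : ℂ) + ((Real.sin θ : ℝ) : ℂ) * Complex.I := by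
    rw [show Complex.I * (θ : ℂ) = (θ : ℂ) * Complex.I by ring, Complex.exp_mul_I]
    push_cast
    ring
  rw [h1]
  have h2 : ‖((Real.cos θ - 1 : ℝ) : ℂ) + ((Real.sin θ : ℝ) : ℂ) * Complex.I‖
      = Real.sqrt ((Real.cos θ - 1) ^ 2 + (Real.sin θ) ^ 2) := by
    rw [Complex.norm_def, Complex.normSq_add_mul_I]
  rw [h2, ← Real.sqrt_sq_eq_abs]
  apply Real.sqrt_le_sqrt
  nlinarith [Real.sin_sq_add_cos_sq θ, Real.one_sub_sq_div_two_le_cos (x := θ)]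

lemma ofReal_rpow_two (a : ℝ) (ha : 0 ≤ a) :
    (ENNReal.ofReal a) ^ (2 : ℝ) = ENNReal.ofReal (a ^ 2) := by
  rw [ENNReal.ofReal_rpow_of_nonneg ha (by norm_num)]
  norm_num

lemma lintegral_sq_eq_eLpNorm_sq {X : Type*} [MeasurableSpace X] (μ : Measure X)
    (f : X → ℂ) :
    ∫⁻ s, ((‖f s‖₊ : ℝ≥0∞)) ^ (2 : ℝ) ∂μ = eLpNorm f 2 μ ^ (2 : ℝ) := by
  rw [eLpNorm_eq_lintegral_rpow_enorm_toReal (by norm_num) (by norm_num)]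
  rw [← ENNReal.rpow_mul]
  norm_num
  rfl

lemma exists_shell {R u : ℝ} (hR : 0 < R) (hu : R < u) :
    ∃ j : ℕ, 2 ^ j * R < u ∧ u ≤ 2 ^ (j + 1) * R := by
  classical
  have hex : ∃ m : ℕ, u ≤ 2 ^ m * R := by
    obtain ⟨n, hn⟩ := pow_unbounded_of_one_lt (u / R) (by norm_num : (1 : ℝ) < 2)
    exact ⟨n, by rw [div_lt_iff₀ hR] at hn; linarith⟩
  set n₀ := Nat.find hex with hn₀
  have hspec : u ≤ 2 ^ n₀ * R := Nat.find_spec hex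
  have hne : n₀ ≠ 0 := by
    intro h
    rw [h] at hspec
    simp at hspec
    linarith
  refine ⟨n₀ - 1, ?_, ?_⟩
  · have := Nat.find_min hex (m := n₀ - 1) (by omega)
    push_neg at this
    linarith
  · have : n₀ - 1 + 1 = n₀ := by omega
    rw [this]
    exact hspec

/-- Consequence of the inverse theorem for `ω(t) = t^α` (case `k < α`).  `B` is realized as
multiplication by the measurable function `b` on `L²(μ)`.  If the best approximation
satisfies `E_r(x,B) = O(r^{-α})` as `r → ∞`, then for every positive integer `k < α` one has
`ω_k(t,x,B) = O(t^k)` as `t → 0⁺`. -/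
theorem inverse_consequence_k_lt_alpha {X : Type*} [MeasurableSpace X] (μ : Measure X)
    (b : X → ℝ) (hb : Measurable b)
    (x : X → ℂ) (hx : MemLp x 2 μ)
    (α : ℝ) (hα : 0 < α)
    (hE : ∃ C : ℝ, ∃ R > (0 : ℝ), ∀ r ≥ R,
      eLpNorm (fun s => if |b s| ≤ r then 0 else x s) 2 μ ≤ ENNReal.ofReal (C * r ^ (-α)))
    (k : ℕ) (hk : 1 ≤ k) (hkα : (k : ℝ) < α) :
    ∃ C' : ℝ, ∃ δ > (0 : ℝ), ∀ t : ℝ, 0 < t → t ≤ δ →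
      (⨆ τ ∈ Ioc (0 : ℝ) t,
          eLpNorm (fun s => (Complex.exp (Complex.I * τ * b s) - 1) ^ k * x s) 2 μ)
        ≤ ENNReal.ofReal (C' * t ^ k) := by
  classical
  obtain ⟨C, R, hR, hC⟩ := hE
  set C₀ : ℝ := max C 0 with hC₀def
  have hC₀ : 0 ≤ C₀ := le_max_right _ _
  -- tail bound with nonnegative constant, squared form
  have htail : ∀ r, R ≤ r →
      (∫⁻ s in {s | r < |b s|}, ((‖x s‖₊ : ℝ≥0∞)) ^ (2 : ℝ) ∂μ)
        ≤ ENNReal.ofReal ((C₀ * r ^ (-α)) ^ 2) := by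
    intro r hr
    have hrpos : 0 < r := hR.trans_le hr
    have hU : MeasurableSet {s | r < |b s|} := measurableSet_lt measurable_const hb.abs
    have hcong : ∫⁻ s in {s | r < |b s|}, ((‖x s‖₊ : ℝ≥0∞)) ^ (2 : ℝ) ∂μ
        = ∫⁻ s in {s | r < |b s|},
            ((‖(fun s => if |b s| ≤ r then 0 else x s) s‖₊ : ℝ≥0∞)) ^ (2 : ℝ) ∂μ := by
      apply setLIntegral_congr_fun_ae hU
      filter_upwards with s hs
      simp only [if_neg (not_le.mpr hs)]
    rw [hcong]
    calc _ ≤ ∫⁻ s, ((‖(fun s => if |b s| ≤ r then 0 else x s) s‖₊ : ℝ≥0∞)) ^ (2 : ℝ) ∂μ :=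
          setLIntegral_le_lintegral _ _
      _ = eLpNorm (fun s => if |b s| ≤ r then 0 else x s) 2 μ ^ (2 : ℝ) :=
          lintegral_sq_eq_eLpNorm_sq μ _
      _ ≤ (ENNReal.ofReal (C₀ * r ^ (-α))) ^ (2 : ℝ) := by
          apply ENNReal.rpow_le_rpow _ (by norm_num)
          refine (hC r hr).trans (ENNReal.ofReal_le_ofReal ?_)
          exact mul_le_mul_of_nonneg_right (le_max_left _ _)
            (Real.rpow_nonneg hrpos.le _)
      _ = ENNReal.ofReal ((C₀ * r ^ (-α)) ^ 2) :=
          ofReal_rpow_two _ (mul_nonneg hC₀ (Real.rpow_nonneg hrpos.le _))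
  -- the weight function
  set g : X → ℝ := fun s => |b s| ^ k * ‖x s‖ with hgdef
  have hg0 : ∀ s, 0 ≤ g s := fun s => mul_nonneg (pow_nonneg (abs_nonneg _) _) (norm_nonneg _)
  -- pointwise comparison
  have key : ∀ (c : ℝ), 0 ≤ c → ∀ s, |b s| ≤ c →
      ((‖g s‖₊ : ℝ≥0∞)) ^ (2 : ℝ) ≤ ENNReal.ofReal ((c ^ k) ^ 2) * ((‖x s‖₊ : ℝ≥0∞)) ^ (2 : ℝ) := by
    intro c hc s hs
    rw [← enorm_eq_nnnorm (g s), Real.enorm_eq_ofReal (hg0 s), ← enorm_eq_nnnorm (x s), ← ofReal_norm (x s),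
      ofReal_rpow_two _ (hg0 s), ofReal_rpow_two _ (norm_nonneg _), ← ENNReal.ofReal_mul
        (by positivity)]
    apply ENNReal.ofReal_le_ofReal
    have h1 : |b s| ^ k ≤ c ^ k := pow_le_pow_left₀ (abs_nonneg _) hs k
    have h2 : 0 ≤ ‖x s‖ := norm_nonneg _
    have h3 : 0 ≤ |b s| ^ k := pow_nonneg (abs_nonneg _) _
    calc g s ^ 2 = (|b s| ^ k) ^ 2 * ‖x s‖ ^ 2 := by rw [hgdef]; ring
      _ ≤ (c ^ k) ^ 2 * ‖x s‖ ^ 2 := by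
          have h4 : (|b s| ^ k) ^ 2 ≤ (c ^ k) ^ 2 := by nlinarith
          exact mul_le_mul_of_nonneg_right h4 (sq_nonneg _)
  -- x is square integrable
  have hxsq : ∫⁻ s, ((‖x s‖₊ : ℝ≥0∞)) ^ (2 : ℝ) ∂μ < ⊤ := by
    rw [lintegral_sq_eq_eLpNorm_sq]
    exact ENNReal.rpow_lt_top_of_nonneg (by norm_num) hx.2.ne
  -- finiteness of ∫ g²
  have hGfin : ∫⁻ s, ((‖g s‖₊ : ℝ≥0∞)) ^ (2 : ℝ) ∂μ < ⊤ := by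
    set A : Set X := {s | |b s| ≤ R} with hAdef
    have hA : MeasurableSet A := measurableSet_le hb.abs measurable_const
    set S : ℕ → Set X := fun j => {s | 2 ^ j * R < |b s| ∧ |b s| ≤ 2 ^ (j + 1) * R} with hSdef
    have hScover : Aᶜ ⊆ ⋃ j, S j := by
      intro s hs
      simp only [hAdef, mem_compl_iff, mem_setOf_eq, not_le] at hs
      obtain ⟨j, h1, h2⟩ := exists_shell hR hs
      exact mem_iUnion.mpr ⟨j, h1, h2⟩
    rw [← lintegral_add_compl (fun s => ((‖g s‖₊ : ℝ≥0∞)) ^ (2 : ℝ)) hA]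
    have hpartA : ∫⁻ s in A, ((‖g s‖₊ : ℝ≥0∞)) ^ (2 : ℝ) ∂μ < ⊤ := by
      calc ∫⁻ s in A, ((‖g s‖₊ : ℝ≥0∞)) ^ (2 : ℝ) ∂μ
          ≤ ∫⁻ s in A, ENNReal.ofReal ((R ^ k) ^ 2) * ((‖x s‖₊ : ℝ≥0∞)) ^ (2 : ℝ) ∂μ :=
            setLIntegral_mono' hA fun s hs => key R hR.le s hs
        _ = ENNReal.ofReal ((R ^ k) ^ 2) * ∫⁻ s in A, ((‖x s‖₊ : ℝ≥0∞)) ^ (2 : ℝ) ∂μ :=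
            lintegral_const_mul' _ _ ENNReal.ofReal_ne_top
        _ ≤ ENNReal.ofReal ((R ^ k) ^ 2) * ∫⁻ s, ((‖x s‖₊ : ℝ≥0∞)) ^ (2 : ℝ) ∂μ := by
            gcongr
            exact Measure.restrict_le_self
        _ < ⊤ := ENNReal.mul_lt_top ENNReal.ofReal_lt_top hxsq
    have hpartC : ∫⁻ s in Aᶜ, ((‖g s‖₊ : ℝ≥0∞)) ^ (2 : ℝ) ∂μ < ⊤ := by
      have hterm : ∀ j : ℕ, ∫⁻ s in S j, ((‖g s‖₊ : ℝ≥0∞)) ^ (2 : ℝ) ∂μ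
          ≤ ENNReal.ofReal (((2 ^ (j + 1) * R) ^ k) ^ 2)
              * ENNReal.ofReal ((C₀ * (2 ^ j * R) ^ (-α)) ^ 2) := by
        intro j
        have hSj : MeasurableSet (S j) :=
          (measurableSet_lt measurable_const hb.abs).inter
            (measurableSet_le hb.abs measurable_const)
        have h2R : (0 : ℝ) ≤ 2 ^ (j + 1) * R := by positivity
        calc ∫⁻ s in S j, ((‖g s‖₊ : ℝ≥0∞)) ^ (2 : ℝ) ∂μ
            ≤ ∫⁻ s in S j, ENNReal.ofReal (((2 ^ (j + 1) * R) ^ k) ^ 2)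
                * ((‖x s‖₊ : ℝ≥0∞)) ^ (2 : ℝ) ∂μ :=
              setLIntegral_mono' hSj fun s hs => key _ h2R s hs.2
          _ = ENNReal.ofReal (((2 ^ (j + 1) * R) ^ k) ^ 2)
                * ∫⁻ s in S j, ((‖x s‖₊ : ℝ≥0∞)) ^ (2 : ℝ) ∂μ :=
              lintegral_const_mul' _ _ ENNReal.ofReal_ne_top
          _ ≤ ENNReal.ofReal (((2 ^ (j + 1) * R) ^ k) ^ 2)
                * ENNReal.ofReal ((C₀ * (2 ^ j * R) ^ (-α)) ^ 2) := by
              gcongr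
              refine le_trans (lintegral_mono_set ?_) (htail (2 ^ j * R) ?_)
              · intro s hs; exact hs.1
              · have h1 : (1 : ℝ) ≤ 2 ^ j := one_le_pow₀ (by norm_num)
                nlinarith
      -- geometric bound for the terms
      set D : ℝ := (((2 * R) ^ k) ^ 2) * ((C₀ * R ^ (-α)) ^ 2) with hDdef
      set Q : ℝ := ((2 : ℝ) ^ k * (2 : ℝ) ^ (-α)) ^ 2 with hQdef
      have hQ0 : 0 ≤ Q := sq_nonneg _
      have hQ1 : Q < 1 := by
        have h2k : (2 : ℝ) ^ k = (2 : ℝ) ^ (k : ℝ) := (Real.rpow_natCast 2 k).symm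
        have : (2 : ℝ) ^ k * (2 : ℝ) ^ (-α) = (2 : ℝ) ^ ((k : ℝ) - α) := by
          rw [h2k, ← Real.rpow_add (by norm_num)]
          ring_nf
        have hlt : (2 : ℝ) ^ ((k : ℝ) - α) < 1 :=
          Real.rpow_lt_one_of_one_lt_of_neg (by norm_num) (by linarith)
        have hnn : (0 : ℝ) ≤ (2 : ℝ) ^ k * (2 : ℝ) ^ (-α) := by positivity
        rw [hQdef, this] at *
        nlinarith
      have hDQ : ∀ j : ℕ, ((2 ^ (j + 1) * R) ^ k) ^ 2 * ((C₀ * (2 ^ j * R) ^ (-α)) ^ 2)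
          = D * Q ^ j := by
        intro j
        have hp : ((2 : ℝ) ^ j) ^ (-α) = ((2 : ℝ) ^ (-α)) ^ j := by
          rw [← Real.rpow_natCast 2 j, ← Real.rpow_mul (by norm_num),
            show (j : ℝ) * (-α) = (-α) * (j : ℝ) from mul_comm _ _,
            Real.rpow_mul (by norm_num), Real.rpow_natCast]
        have h1 : (2 : ℝ) ^ (j + 1) * R = (2 * R) * 2 ^ j := by ring
        have h2 : ((2 : ℝ) ^ j * R) ^ (-α) = ((2 : ℝ) ^ (-α)) ^ j * R ^ (-α) := by
          rw [Real.mul_rpow (by positivity) hR.le, hp]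
        rw [h1, h2, hDdef, hQdef]
        rw [mul_pow (2 * R) ((2:ℝ) ^ j) k, ← pow_mul ((2:ℝ)) j k,
          show j * k = k * j from mul_comm _ _, pow_mul]
        ring
      calc ∫⁻ s in Aᶜ, ((‖g s‖₊ : ℝ≥0∞)) ^ (2 : ℝ) ∂μ
          ≤ ∫⁻ s in ⋃ j, S j, ((‖g s‖₊ : ℝ≥0∞)) ^ (2 : ℝ) ∂μ := lintegral_mono_set hScover
        _ ≤ ∑' j, ∫⁻ s in S j, ((‖g s‖₊ : ℝ≥0∞)) ^ (2 : ℝ) ∂μ := lintegral_iUnion_le _ _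
        _ ≤ ∑' j, ENNReal.ofReal (D * Q ^ j) := by
            apply ENNReal.tsum_le_tsum
            intro j
            refine (hterm j).trans ?_
            rw [← ENNReal.ofReal_mul (by positivity), hDQ j]
        _ = ∑' j, ENNReal.ofReal D * (ENNReal.ofReal Q) ^ j := by
            congr 1
            funext j
            rw [ENNReal.ofReal_mul (by nlinarith [sq_nonneg ((2 * R) ^ k), sq_nonneg (C₀ * R ^ (-α))]),
              ENNReal.ofReal_pow hQ0]
        _ = ENNReal.ofReal D * (1 - ENNReal.ofReal Q)⁻¹ := by
            rw [ENNReal.tsum_mul_left, ENNReal.tsum_geometric]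
        _ < ⊤ := by
            apply ENNReal.mul_lt_top ENNReal.ofReal_lt_top
            rw [ENNReal.inv_lt_top]
            rw [tsub_pos_iff_lt]
            exact lt_of_lt_of_le (ENNReal.ofReal_lt_one.mpr hQ1) (by norm_num)
    exact ENNReal.add_lt_top.mpr ⟨hpartA, hpartC⟩
  -- conclude
  have hMfin : eLpNorm g 2 μ < ⊤ := by
    rw [eLpNorm_eq_lintegral_rpow_enorm_toReal (by norm_num) (by norm_num)]
    apply ENNReal.rpow_lt_top_of_nonneg (by norm_num)
    simpa using (show ∫⁻ (x : X), ‖g x‖ₑ ^ (2:ℝ) ∂μ ≠ ⊤ from hGfin.ne)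
  refine ⟨(eLpNorm g 2 μ).toReal, 1, one_pos, fun t ht ht1 => ?_⟩
  apply iSup₂_le
  intro τ hτ
  obtain ⟨hτ0, hτt⟩ := hτ
  have hbound : eLpNorm (fun s => (Complex.exp (Complex.I * τ * b s) - 1) ^ k * x s) 2 μ
      ≤ eLpNorm (fun s => t ^ k * g s) 2 μ := by
    apply eLpNorm_mono_real
    intro s
    rw [norm_mul, norm_pow]
    have h1 : ‖Complex.exp (Complex.I * τ * b s) - 1‖ ≤ |τ * b s| := by
      have := norm_exp_I_mul_sub_one_le (τ * b s)
      rw [show Complex.I * (τ : ℂ) * (b s : ℂ) = Complex.I * ((τ * b s : ℝ) : ℂ) by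
        push_cast; ring] at *
      exact this
    have h2 : ‖Complex.exp (Complex.I * τ * b s) - 1‖ ^ k ≤ (t * |b s|) ^ k := by
      apply pow_le_pow_left₀ (norm_nonneg _)
      refine h1.trans ?_
      rw [abs_mul, abs_of_pos hτ0]
      exact mul_le_mul_of_nonneg_right hτt (abs_nonneg _)
    calc ‖Complex.exp (Complex.I * τ * b s) - 1‖ ^ k * ‖x s‖
        ≤ (t * |b s|) ^ k * ‖x s‖ :=
          mul_le_mul_of_nonneg_right h2 (norm_nonneg _)
      _ = t ^ k * g s := by rw [hgdef, mul_pow]; ring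
  refine le_trans hbound ?_
  have hsmul : (fun s => t ^ k * g s) = (t ^ k : ℝ) • g := by
    funext s; simp [smul_eq_mul]
  rw [hsmul, eLpNorm_const_smul]
  have htk : (0 : ℝ) ≤ t ^ k := pow_nonneg ht.le _
  rw [Real.enorm_eq_ofReal htk]
  calc ENNReal.ofReal (t ^ k) * eLpNorm g 2 μ
      ≤ ENNReal.ofReal (t ^ k) * ENNReal.ofReal ((eLpNorm g 2 μ).toReal) := by
        gcongr
        rw [ENNReal.ofReal_toReal hMfin.ne]
    _ = ENNReal.ofReal ((eLpNorm g 2 μ).toReal * t ^ k) := by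
        rw [← ENNReal.ofReal_mul htk, mul_comm]
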